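/- An n-colouring (proper) of the lexicographic product F[K_q] is equivalent to a homomorphism from F to the Kneser graph K(n,q): F[K_q] is n-colourable if and only if F → K(n,q). -/

import Mathlib

open SimpleGraph

universe u v w

/-- The categorical (tensor) product of two simple graphs. -/
def tensorGraph {α : Type u} {β : Type v} (G : SimpleGraph α) (H : SimpleGraph β) :
    SimpleGraph (α × β) where
  Adj p q := G.Adj p.1 q.1 ∧ H.Adj p.2 q.2
  symm := ⟨fun p q h => ⟨h.1.symm, h.2.symm⟩⟩
  loopless := ⟨fun p h => G.loopless.irrefl p.1 h.1⟩

/-- The lexicographic blow-up F[K_q]: each vertex replaced by a q-clique. -/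
def lexBlow {α : Type u} (F : SimpleGraph α) (q : ℕ) : SimpleGraph (α × Fin q) where
  Adj p r := F.Adj p.1 r.1 ∨ (p.1 = r.1 ∧ p.2 ≠ r.2)
  symm := by
    constructor
    intro p r h
    rcases h with h | ⟨h1, h2⟩
    · exact Or.inl h.symm
    · exact Or.inr ⟨h1.symm, h2.symm⟩
  loopless := by
    constructor
    intro p h
    rcases h with h | ⟨_, h2⟩
    · exact F.loopless.irrefl p.1 h
    · exact h2 rfl

/-- The Kneser graph K(n,q): q-subsets of an n-set, adjacent iff disjoint. -/
def kneserGraph (n q : ℕ) : SimpleGraph {s : Finset (Fin n) // s.card = q} where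
  Adj A B := A ≠ B ∧ Disjoint A.1 B.1
  symm := ⟨fun A B h => ⟨h.1.symm, h.2.symm⟩⟩
  loopless := ⟨fun A h => h.1 rfl⟩

theorem lex_colorable_iff_hom_kneser {α : Type u} (F : SimpleGraph α) (n q : ℕ)
    (hq : 0 < q) :
    (lexBlow F q).Colorable n ↔ Nonempty (F →g kneserGraph n q) := by
  constructor
  · rintro ⟨c⟩
    have hinj : ∀ x : α, Function.Injective (fun i : Fin q => c (x, i)) := by
      intro x i j hij
      simp only at hij
      by_contra hne
      exact c.valid (show (lexBlow F q).Adj (x, i) (x, j) from Or.inr ⟨rfl, hne⟩) hij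
    have hcard : ∀ x : α,
        (Finset.univ.image (fun i : Fin q => c (x, i))).card = q := by
      intro x
      rw [Finset.card_image_of_injective _ (hinj x), Finset.card_univ, Fintype.card_fin]
    have hdisj : ∀ x y : α, F.Adj x y →
        Disjoint (Finset.univ.image (fun i : Fin q => c (x, i)))
          (Finset.univ.image (fun i : Fin q => c (y, i))) := by
      intro x y hxy
      rw [Finset.disjoint_left]
      rintro a ha hb
      simp only [Finset.mem_image, Finset.mem_univ, true_and] at ha hb
      obtain ⟨i, hi⟩ := ha
      obtain ⟨j, hj⟩ := hb
      exact c.valid (Or.inl hxy : (lexBlow F q).Adj (x, i) (y, j)) (hi.trans hj.symm)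
    refine ⟨⟨fun x => ⟨Finset.univ.image (fun i : Fin q => c (x, i)), hcard x⟩, ?_⟩⟩
    intro x y hxy
    refine ⟨?_, hdisj x y hxy⟩
    intro heq
    have := hdisj x y hxy
    rw [Subtype.ext_iff] at heq
    simp only at heq
    rw [heq, disjoint_self] at this
    have h0 := hcard y
    rw [this] at h0
    simp only [Finset.bot_eq_empty, Finset.card_empty] at h0
    omega
  · rintro ⟨f⟩
    refine ⟨⟨fun p => ((f p.1).1.orderIsoOfFin (by simpa using (f p.1).2) p.2 : Fin n), ?_⟩⟩
    rintro ⟨x, i⟩ ⟨y, j⟩ hadj heq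
    simp only at heq hadj
    rcases hadj with h | ⟨h1, h2⟩
    · have hd := (f.map_adj h).2
      have hx : ((f x).1.orderIsoOfFin (by simpa using (f x).2) i : Fin n) ∈ (f x).1 :=
        ((f x).1.orderIsoOfFin _ i).2
      have hy : ((f y).1.orderIsoOfFin (by simpa using (f y).2) j : Fin n) ∈ (f y).1 :=
        ((f y).1.orderIsoOfFin _ j).2
      rw [heq] at hx
      exact Finset.disjoint_left.mp hd hx hy
    · subst h1
      exact h2 (((f x).1.orderIsoOfFin (by simpa using (f x).2)).injective
        (Subtype.ext heq))
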